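/- Let n ≥ 2 be even and N = n + 1. Let λ = (λ_1, …, λ_n) be a regular essentially self-dual highest weight for GL_n, let d′ ∈ ℤ, and set μ = (λ_1, …, λ_n, d′) ∈ ℤ^N, w = w(λ), and p = (w + a_{n/2}(λ))/2. Then there exist a dominant weight μ̃ ∈ ℤ^N and a permutation σ ∈ S_N with ℓ(σ) = n/2 such that σ·μ̃ = μ, if and only if w − 2p + 2 − N ≤ λ_1 + λ_n − 2d′ ≤ 2p − w − 2 − N. -/

import Mathlib

/-- The length (number of inversions) of a permutation of `Fin N`:
`ℓ(σ) = #{ (i,j) : i < j and σ(i) > σ(j) }`. -/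
def permLength {N : ℕ} (σ : Equiv.Perm (Fin N)) : ℕ :=
  (Finset.univ.filter (fun q : Fin N × Fin N => q.1 < q.2 ∧ σ q.2 < σ q.1)).card

/-- The half-sum of positive roots of `GL_N`, `ρ̃_i = (N + 1 − 2i)/2` in 1-based
indexing, i.e. `ρ̃_i = (N − 1)/2 − i` in 0-based indexing (`N` odd). -/
def rhoGL (N : ℕ) : Fin N → ℤ := fun i => ((N : ℤ) - 1) / 2 - (i : ℤ)

lemma aux_card_interval (N a b : ℕ) (hb : b ≤ N) :
    ((Finset.univ.filter (fun i : Fin N => a ≤ i.val ∧ i.val < b)).card) = b - a := by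
  apply Finset.card_eq_of_bijective (fun i hi => (⟨a + i, by omega⟩ : Fin N))
  · intro x hx
    simp only [Finset.mem_filter, Finset.mem_univ, true_and] at hx
    exact ⟨x.val - a, by omega, by apply Fin.ext; simp; omega⟩
  · intro i hi
    simp only [Finset.mem_filter, Finset.mem_univ, true_and]
    exact ⟨by show a ≤ a + i; omega, by show a + i < b; omega⟩
  · intro i j hi hj h
    have := congrArg Fin.val h
    simp at this; omega

lemma aux_permLength_inv {N : ℕ} (σ : Equiv.Perm (Fin N)) :
    permLength σ⁻¹ = permLength σ := by
  unfold permLength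
  apply Finset.card_nbij' (fun q => (σ⁻¹ q.2, σ⁻¹ q.1)) (fun q => (σ q.2, σ q.1))
  · intro q hq
    simp only [Finset.mem_coe, Finset.mem_filter, Finset.mem_univ, true_and] at hq ⊢
    simpa [hq.1] using hq.2
  · intro q hq
    simp only [Finset.mem_coe, Finset.mem_filter, Finset.mem_univ, true_and] at hq ⊢
    simp [hq.2, hq.1]
  · intro q hq; simp
  · intro q hq; simp

set_option maxHeartbeats 2000000 in
theorem stmt_10 (n : ℕ) (hn : 2 ≤ n) (hne : Even n) (N : ℕ) (hN : N = n + 1)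
    (lam : ℕ → ℤ) (d' : ℤ)
    (hmono : ∀ i, 1 ≤ i → i < n → lam (i + 1) ≤ lam i)
    (hreg : ∀ i, 1 ≤ i → i ≤ n - 1 → 2 ≤ lam i - lam (i + 1) + 1)
    (hsd : ∀ i, 1 ≤ i → i ≤ n - 1 →
      lam i - lam (i + 1) + 1 = lam (n - i) - lam (n - i + 1) + 1)
    (mu : Fin N → ℤ)
    (hmu : ∀ i : Fin N, mu i = if (i : ℕ) < n then lam ((i : ℕ) + 1) else d')
    (w : ℤ) (hw : w = lam 1 - lam n + (n : ℤ) - 1)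
    (p : ℤ) (hp : 2 * p = w + (lam (n / 2) - lam (n / 2 + 1) + 1)) :
    (∃ (muTilde : Fin N → ℤ) (σ : Equiv.Perm (Fin N)),
      (∀ i j : Fin N, i ≤ j → muTilde j ≤ muTilde i)
      ∧ permLength σ = n / 2
      ∧ (∀ i : Fin N, (muTilde (σ⁻¹ i) + rhoGL N (σ⁻¹ i)) - rhoGL N i = mu i))
    ↔ (w - 2 * p + 2 - (N : ℤ) ≤ lam 1 + lam n - 2 * d'
        ∧ lam 1 + lam n - 2 * d' ≤ 2 * p - w - 2 - (N : ℤ)) := by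
  obtain ⟨m, hm⟩ : ∃ m, n = 2 * m := by
    obtain ⟨k, hk⟩ := hne; exact ⟨k, by omega⟩
  have hm1 : 1 ≤ m := by omega
  have hn2 : n / 2 = m := by omega
  rw [hn2] at hp
  have hNZ : (N : ℤ) = 2 * (m : ℤ) + 1 := by rw [hN, hm]; push_cast; ring
  have hrho : ∀ i : Fin N, rhoGL N i = (m : ℤ) - ((i : ℕ) : ℤ) := by
    intro i
    unfold rhoGL
    have h2 : ((N : ℤ) - 1) = 2 * (m : ℤ) := by omega
    rw [h2, Int.mul_ediv_cancel_left _ (by norm_num : (2:ℤ) ≠ 0)]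
  have lam_anti : ∀ i j : ℕ, 1 ≤ i → i ≤ j → j ≤ n → lam j ≤ lam i := by
    intro i j h1
    induction j with
    | zero => intro h _; omega
    | succ k ih =>
      intro hij hjn
      rcases Nat.lt_or_ge i (k + 1) with h | h
      · have h2 : lam (k + 1) ≤ lam k := hmono k (by omega) (by omega)
        have h3 := ih (by omega) (by omega)
        omega
      · have : i = k + 1 := by omega
        rw [this]
  have hsum : lam 1 + lam n = lam m + lam (m + 1) := by
    have key : ∀ k : ℕ, 1 ≤ k → k ≤ m → lam 1 + lam n = lam k + lam (n + 1 - k) := by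
      intro k
      induction k with
      | zero => intro h _; omega
      | succ j ih =>
        intro _ hjm
        rcases Nat.eq_zero_or_pos j with hj0 | hj0
        · subst hj0
          have e : n + 1 - 1 = n := by omega
          rw [e]
        · have h := ih (by omega) (by omega)
          have hs := hsd j (by omega) (by omega)
          have e1 : n + 1 - j = n - j + 1 := by omega
          have e2 : n + 1 - (j + 1) = n - j := by omega
          rw [e2]
          rw [e1] at h
          omega
    have h := key m hm1 le_rfl
    have e : n + 1 - m = m + 1 := by omega
    rwa [e] at h
  set V : ℕ → ℤ := fun k => if k < n then lam (k + 1) + (m : ℤ) - k else d' - (m : ℤ) with hVdef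
  have hV : ∀ i : Fin N, mu i + rhoGL N i = V (i : ℕ) := by
    intro i
    have hiv := i.isLt
    rw [hmu, hrho]
    simp only [hVdef]
    by_cases h : (i : ℕ) < n
    · simp only [if_pos h]; ring
    · simp only [if_neg h]
      have hz : (((i : ℕ)) : ℤ) = 2 * (m : ℤ) := by omega
      rw [hz]; ring
  have hVn : V n = d' - (m : ℤ) := by simp only [hVdef]; simp
  have hVm : V m = lam (m + 1) := by
    simp only [hVdef, if_pos (show m < n by omega)]; ring
  have hVm1 : V (m - 1) = lam m + 1 := by
    simp only [hVdef, if_pos (show m - 1 < n by omega)]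
    have e : m - 1 + 1 = m := by omega
    rw [e]
    have hz : (((m - 1 : ℕ)) : ℤ) = (m : ℤ) - 1 := by omega
    rw [hz]; ring
  have hVstrict : ∀ a b : ℕ, a < b → b < n → V b < V a := by
    intro a b hab hbn
    simp only [hVdef, if_pos (show a < n by omega), if_pos hbn]
    have h1 := lam_anti (a + 1) (b + 1) (by omega) (by omega) (by omega)
    have h2 : (a : ℤ) < (b : ℤ) := by exact_mod_cast hab
    linarith
  have hVanti : ∀ a b : ℕ, a ≤ b → b < n → V b ≤ V a := by
    intro a b hab hbn
    rcases Nat.eq_or_lt_of_le hab with h | h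
    · rw [h]
    · exact le_of_lt (hVstrict a b h hbn)
  constructor
  · rintro ⟨muTilde, σ, hdom, hlen, hdot⟩
    set u : Fin N → ℤ := fun j => muTilde j + rhoGL N j with hudef
    have ustrict : ∀ i j : Fin N, i < j → u j < u i := by
      intro i j hij
      have h1 := hdom i j (le_of_lt hij)
      have h2 : (((i : ℕ)) : ℤ) < (((j : ℕ)) : ℤ) := by exact_mod_cast (Fin.lt_def.mp hij)
      show muTilde j + rhoGL N j < muTilde i + rhoGL N i
      rw [hrho i, hrho j]
      linarith
    have hu : ∀ i : Fin N, u (σ⁻¹ i) = V (i : ℕ) := by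
      intro i
      have h1 := hdot i
      have h2 := hV i
      show muTilde (σ⁻¹ i) + rhoGL N (σ⁻¹ i) = V (i : ℕ)
      linarith
    set S := Finset.univ.filter
      (fun q : Fin N × Fin N => q.1 < q.2 ∧ V (q.1 : ℕ) < V (q.2 : ℕ)) with hSdef
    have hScard : S.card = m := by
      have e : S = Finset.univ.filter
          (fun q : Fin N × Fin N => q.1 < q.2 ∧ σ⁻¹ q.2 < σ⁻¹ q.1) := by
        rw [hSdef]
        apply Finset.filter_congr
        intro q _
        constructor
        · rintro ⟨h1, h2⟩
          refine ⟨h1, ?_⟩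
          rcases lt_trichotomy (σ⁻¹ q.1) (σ⁻¹ q.2) with h | h | h
          · have h3 := ustrict _ _ h
            rw [hu q.1, hu q.2] at h3
            exact absurd h2 (not_lt.mpr (le_of_lt h3))
          · have h4 : q.1 = q.2 := (Equiv.injective σ⁻¹) h
            exact absurd (h4 ▸ h1) (lt_irrefl _)
          · exact h
        · rintro ⟨h1, h2⟩
          refine ⟨h1, ?_⟩
          have h3 := ustrict _ _ h2
          rwa [hu q.1, hu q.2] at h3
      calc S.card = permLength σ⁻¹ := by rw [e]; rfl
        _ = permLength σ := aux_permLength_inv σ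
        _ = m := by rw [hlen, hn2]
    set T := Finset.univ.filter (fun i : Fin N => (i : ℕ) < n ∧ V (i : ℕ) < V n) with hTdef
    have hq2n : ∀ q : Fin N × Fin N, q.1 < q.2 → V (q.1 : ℕ) < V (q.2 : ℕ) → (q.2 : ℕ) = n := by
      intro q h1 h2
      by_contra hc
      have hlt : (q.2 : ℕ) < n := by have := q.2.isLt; omega
      exact absurd h2 (not_lt.mpr (le_of_lt (hVstrict _ _ (Fin.lt_def.mp h1) hlt)))
    have hTcard : T.card = m := by
      rw [← hScard, hTdef, hSdef]
      apply Finset.card_nbij' (fun a => (a, (⟨n, by omega⟩ : Fin N))) (fun q => q.1)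
      · intro a ha
        simp only [Finset.mem_coe, Finset.mem_filter, Finset.mem_univ, true_and] at ha ⊢
        exact ⟨Fin.lt_def.mpr (by show (a : ℕ) < n; exact ha.1), ha.2⟩
      · intro q hq
        simp only [Finset.mem_coe, Finset.mem_filter, Finset.mem_univ, true_and] at hq ⊢
        obtain ⟨h1, h2⟩ := hq
        have h3 := hq2n q h1 h2
        exact ⟨by have := Fin.lt_def.mp h1; omega, by rwa [h3] at h2⟩
      · intro a ha; rfl
      · intro q hq
        simp only [Finset.mem_coe, Finset.mem_filter, Finset.mem_univ, true_and] at hq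
        obtain ⟨h1, h2⟩ := hq
        have h3 := hq2n q h1 h2
        exact Prod.ext_iff.mpr ⟨rfl, Fin.ext (by show n = (q.2 : ℕ); omega)⟩
    have hA : V m < V n := by
      by_contra hc
      push_neg at hc
      have hsub : T ⊆ Finset.univ.filter (fun i : Fin N => m + 1 ≤ (i : ℕ) ∧ (i : ℕ) < n) := by
        intro i hi
        simp only [hTdef, Finset.mem_filter, Finset.mem_univ, true_and] at hi ⊢
        refine ⟨?_, hi.1⟩
        by_contra hc2
        have h4 : (i : ℕ) ≤ m := by omega
        have h5 : V m ≤ V (i : ℕ) := hVanti _ _ h4 (by omega)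
        linarith [hi.2]
      have hle := Finset.card_le_card hsub
      rw [hTcard, aux_card_interval N (m + 1) n (by omega)] at hle
      omega
    have hB : V n < V (m - 1) := by
      have hne2 : V (m - 1) ≠ V n := by
        intro hc
        have e1 : u (σ⁻¹ (⟨m - 1, by omega⟩ : Fin N)) = V (m - 1) := hu _
        have e2 : u (σ⁻¹ (⟨n, by omega⟩ : Fin N)) = V n := hu _
        have uinj : Function.Injective u := by
          intro a b hab
          rcases lt_trichotomy a b with h | h | h
          · exact absurd hab (ne_of_gt (ustrict a b h))
          · exact h
          · exact absurd hab (ne_of_lt (ustrict b a h))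
        have e3 : σ⁻¹ (⟨m - 1, by omega⟩ : Fin N) = σ⁻¹ (⟨n, by omega⟩ : Fin N) :=
          uinj (by rw [e1, e2, hc])
        have e4 := (Equiv.injective σ⁻¹) e3
        have e5 := congrArg Fin.val e4
        simp only [] at e5
        omega
      by_contra hc
      push_neg at hc
      have hlt : V (m - 1) < V n := lt_of_le_of_ne hc hne2
      have hsub : Finset.univ.filter (fun i : Fin N => m - 1 ≤ (i : ℕ) ∧ (i : ℕ) < n) ⊆ T := by
        intro i hi
        simp only [hTdef, Finset.mem_filter, Finset.mem_univ, true_and] at hi ⊢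
        refine ⟨hi.2, ?_⟩
        have h4 : V (i : ℕ) ≤ V (m - 1) := hVanti _ _ hi.1 hi.2
        linarith
      have hle := Finset.card_le_card hsub
      rw [hTcard, aux_card_interval N (m - 1) n (by omega)] at hle
      omega
    rw [hVm, hVn] at hA
    rw [hVn, hVm1] at hB
    constructor
    · linarith
    · linarith
  · rintro ⟨hlow, hhigh⟩
    have hd1 : lam (m + 1) + (m : ℤ) + 1 ≤ d' := by linarith
    have hd2 : d' ≤ lam m + (m : ℤ) := by linarith
    have hlm : lam (m + 1) + 1 ≤ lam m := by linarith
    set mt : Fin N → ℤ := fun j =>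
      if (j : ℕ) < m then lam ((j : ℕ) + 1)
      else if (j : ℕ) = m then d' - (m : ℤ) else lam (j : ℕ) + 1 with hmt
    set σ : Equiv.Perm (Fin N) :=
      ⟨fun i => ⟨if i.val < m then i.val else if i.val = m then n else i.val - 1,
          by have := i.isLt; split_ifs <;> omega⟩,
       fun i => ⟨if i.val < m then i.val else if i.val < n then i.val + 1 else m,
          by have := i.isLt; split_ifs <;> omega⟩,
       by intro x; apply Fin.ext; simp only [Fin.val_mk]; have := x.isLt; split_ifs <;> omega,
       by intro x; apply Fin.ext; simp only [Fin.val_mk]; have := x.isLt; split_ifs <;> omega⟩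
      with hσ
    have hmtval : ∀ j : Fin N, mt j =
        if (j : ℕ) < m then lam ((j : ℕ) + 1)
        else if (j : ℕ) = m then d' - (m : ℤ) else lam (j : ℕ) + 1 := fun _ => rfl
    have hσval : ∀ x : Fin N, ((σ x : Fin N) : ℕ)
        = if (x : ℕ) < m then (x : ℕ) else if (x : ℕ) = m then n else (x : ℕ) - 1 :=
      fun _ => rfl
    have hτval : ∀ x : Fin N, ((σ⁻¹ x : Fin N) : ℕ)
        = if (x : ℕ) < m then (x : ℕ) else if (x : ℕ) < n then (x : ℕ) + 1 else m :=
      fun _ => rfl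
    refine ⟨mt, σ, ?_, ?_, ?_⟩
    · intro i j hij
      have hi := i.isLt
      have hj := j.isLt
      have hij' : (i : ℕ) ≤ (j : ℕ) := hij
      rw [hmtval i, hmtval j]
      by_cases hjm : (j : ℕ) < m
      · have him : (i : ℕ) < m := by omega
        rw [if_pos hjm, if_pos him]
        exact lam_anti ((i : ℕ) + 1) ((j : ℕ) + 1) (by omega) (by omega) (by omega)
      · by_cases hjm2 : (j : ℕ) = m
        · rw [if_neg hjm, if_pos hjm2]
          by_cases him : (i : ℕ) < m
          · rw [if_pos him]
            have := lam_anti ((i : ℕ) + 1) m (by omega) (by omega) (by omega)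
            linarith
          · have him2 : (i : ℕ) = m := by omega
            rw [if_neg him, if_pos him2]
        · rw [if_neg hjm, if_neg hjm2]
          have hmj : m < (j : ℕ) := by omega
          have hlj : lam (j : ℕ) ≤ lam (m + 1) :=
            lam_anti (m + 1) (j : ℕ) (by omega) (by omega) (by omega)
          by_cases him : (i : ℕ) < m
          · rw [if_pos him]
            have := lam_anti ((i : ℕ) + 1) m (by omega) (by omega) (by omega)
            linarith
          · by_cases him2 : (i : ℕ) = m
            · rw [if_neg him, if_pos him2]
              linarith
            · rw [if_neg him, if_neg him2]
              have := lam_anti (i : ℕ) (j : ℕ) (by omega) hij' (by omega)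
              linarith
    · show permLength σ = n / 2
      rw [hn2]
      unfold permLength
      apply Finset.card_eq_of_bijective
        (fun i hi => ((⟨m, by omega⟩ : Fin N), (⟨m + 1 + i, by omega⟩ : Fin N)))
      · intro q hq
        simp only [Finset.mem_filter, Finset.mem_univ, true_and] at hq
        obtain ⟨h1, h2⟩ := hq
        have h1' : (q.1 : ℕ) < (q.2 : ℕ) := Fin.lt_def.mp h1
        have h2' : ((σ q.2 : Fin N) : ℕ) < ((σ q.1 : Fin N) : ℕ) := Fin.lt_def.mp h2
        rw [hσval q.1, hσval q.2] at h2'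
        have ha := q.1.isLt
        have hb := q.2.isLt
        have hc : (q.1 : ℕ) = m ∧ m < (q.2 : ℕ) := by
          split_ifs at h2' <;> omega
        refine ⟨(q.2 : ℕ) - (m + 1), by omega, ?_⟩
        exact Prod.ext_iff.mpr
          ⟨Fin.ext (by show m = (q.1 : ℕ); omega),
           Fin.ext (by show m + 1 + ((q.2 : ℕ) - (m + 1)) = (q.2 : ℕ); omega)⟩
      · intro i hi
        simp only [Finset.mem_filter, Finset.mem_univ, true_and]
        constructor
        · exact Fin.lt_def.mpr (by show m < m + 1 + i; omega)
        · rw [Fin.lt_def, hσval, hσval]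
          simp only [Fin.val_mk]
          split_ifs <;> omega
      · intro i j hi hj hEq
        simp only [Prod.mk.injEq, Fin.mk.injEq] at hEq
        omega
    · intro i
      have hiv := i.isLt
      have hτ := hτval i
      rw [hmtval (σ⁻¹ i), hmu i, hrho (σ⁻¹ i), hrho i, hτ]
      by_cases h1 : (i : ℕ) < m
      · simp only [if_pos h1, if_pos (show (i : ℕ) < n by omega)]
        ring
      · by_cases h2 : (i : ℕ) < n
        · simp only [if_neg h1, if_pos h2,
            if_neg (show ¬ ((i : ℕ) + 1 < m) by omega),
            if_neg (show ¬ ((i : ℕ) + 1 = m) by omega)]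
          push_cast
          ring
        · simp only [if_neg h1, if_neg h2,
            if_neg (show ¬ (m < m) by omega), if_pos (show m = m from rfl), if_true]
          have hz : (((i : ℕ)) : ℤ) = 2 * (m : ℤ) := by omega
          rw [hz]
          ring
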